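/- Let K be a proper simplicial complex on [n] without ghost vertices which is roughly weighted with strictly positive weights w satisfying w([n]) = 1 and quota q with 0 < q < 1. Then the pair x, y : [n] → ℝ defined by x(i) = (1−q)·w(i) and y(i) = q·w(i) is a non-strict K-submodular function. In particular, for every Y ⊆ [n] with Y ∉ K one has (1−q)·w(Y) ≥ q·w(Yᶜ), and for every X ∈ K one has (1−q)·w(X) ≤ q·w(Xᶜ). -/
import Mathlib


open Finset

/-- A simplicial complex on `[n]`: a family of subsets containing `∅` and
closed under taking subsets. -/
def IsComplex (n : ℕ) (K : Set (Finset (Fin n))) : Prop :=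
  ∅ ∈ K ∧ ∀ A B : Finset (Fin n), A ⊆ B → B ∈ K → A ∈ K

/-- No ghost vertices: every singleton is a face. -/
def NoGhost (n : ℕ) (K : Set (Finset (Fin n))) : Prop :=
  ∀ i : Fin n, ({i} : Finset (Fin n)) ∈ K

/-- `K` is a threshold complex: there are strictly positive weights `w` and a
quota `q` with `A ∈ K ↔ w(A) < q`. -/
def IsThreshold (n : ℕ) (K : Set (Finset (Fin n))) : Prop :=
  ∃ (w : Fin n → ℝ) (q : ℝ), (∀ i, 0 < w i) ∧
    ∀ A : Finset (Fin n), A ∈ K ↔ ∑ i ∈ A, w i < q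

/-- A K-submodular function: a pair of vectors `x y : [n] → ℝ` satisfying, for
every ridge datum `[n] = X1 ⊔ {c1,c2} ⊔ X2` (so `X2 = (X1 ∪ {c1,c2})ᶜ`) with
`X1 ∈ K` and `X2 ∈ K°` (i.e. `X2ᶜ = X1 ∪ {c1,c2} ∉ K`):
the Λ-, V- and X-configuration inequalities. -/
def IsKSubmodular (n : ℕ) (K : Set (Finset (Fin n))) (x y : Fin n → ℝ) : Prop :=
  ∀ (X1 : Finset (Fin n)) (c1 c2 : Fin n),
    c1 ≠ c2 → c1 ∉ X1 → c2 ∉ X1 → X1 ∈ K → insert c1 (insert c2 X1) ∉ K →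
    ((insert c1 X1 ∈ K → insert c2 X1 ∈ K →
        ∑ i ∈ X1, x i + x c1 + x c2 > ∑ j ∈ (insert c1 (insert c2 X1))ᶜ, y j) ∧
     (insert c1 X1 ∉ K → insert c2 X1 ∉ K →
        ∑ j ∈ (insert c1 (insert c2 X1))ᶜ, y j + y c1 + y c2 > ∑ i ∈ X1, x i) ∧
     (insert c2 X1 ∈ K → insert c1 X1 ∉ K → x c2 + y c2 > 0))

/-- A non-strict K-submodular function: the Λ- and V-inequalities are non-strict,
and for X-configurations with distinguished element `c2` one requires
`x c2 > 0` and `y c2 > 0`. -/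
def IsNonStrictKSubmodular (n : ℕ) (K : Set (Finset (Fin n))) (x y : Fin n → ℝ) : Prop :=
  ∀ (X1 : Finset (Fin n)) (c1 c2 : Fin n),
    c1 ≠ c2 → c1 ∉ X1 → c2 ∉ X1 → X1 ∈ K → insert c1 (insert c2 X1) ∉ K →
    ((insert c1 X1 ∈ K → insert c2 X1 ∈ K →
        ∑ i ∈ X1, x i + x c1 + x c2 ≥ ∑ j ∈ (insert c1 (insert c2 X1))ᶜ, y j) ∧
     (insert c1 X1 ∉ K → insert c2 X1 ∉ K →
        ∑ j ∈ (insert c1 (insert c2 X1))ᶜ, y j + y c1 + y c2 ≥ ∑ i ∈ X1, x i) ∧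
     (insert c2 X1 ∈ K → insert c1 X1 ∉ K → 0 < x c2 ∧ 0 < y c2))

/-- `K` (the set of losing coalitions) is roughly weighted with strictly positive
weights `w` and quota `q > 0`. -/
def RoughlyWeighted (n : ℕ) (K : Set (Finset (Fin n))) (w : Fin n → ℝ) (q : ℝ) : Prop :=
  (∀ i, 0 < w i) ∧ 0 < q ∧ ∀ X : Finset (Fin n),
    (q < ∑ i ∈ X, w i → X ∉ K) ∧ (∑ i ∈ X, w i < q → X ∈ K)

/-- If the proper simplicial complex `K` on `[n]` without ghost
vertices is roughly weighted with strictly positive weights `w`, `w([n]) = 1`,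
and quota `0 < q < 1`, then `x(i) = (1-q)·w(i)`, `y(i) = q·w(i)` is a non-strict
K-submodular function; in particular `(1-q)·w(Y) ≥ q·w(Yᶜ)` for every non-face
`Y` and `(1-q)·w(X) ≤ q·w(Xᶜ)` for every face `X`. -/
theorem nonStrictKSubmodular_of_roughlyWeighted (n : ℕ) (K : Set (Finset (Fin n)))
    (hK : IsComplex n K) (hproper : K ≠ Set.univ) (hghost : NoGhost n K)
    (w : Fin n → ℝ) (q : ℝ) (hrw : RoughlyWeighted n K w q)
    (hsum : ∑ i, w i = 1) (hq1 : q < 1) :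
    IsNonStrictKSubmodular n K (fun i => (1 - q) * w i) (fun i => q * w i) ∧
    (∀ Y : Finset (Fin n), Y ∉ K →
      (1 - q) * ∑ i ∈ Y, w i ≥ q * ∑ i ∈ Yᶜ, w i) ∧
    (∀ X : Finset (Fin n), X ∈ K →
      (1 - q) * ∑ i ∈ X, w i ≤ q * ∑ i ∈ Xᶜ, w i) := by
  obtain ⟨hw, hq, hcl⟩ := hrw
  have key1 : ∀ X : Finset (Fin n), X ∈ K → ∑ i ∈ X, w i ≤ q := fun X hX =>
    le_of_not_gt fun h => (hcl X).1 h hX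
  have key2 : ∀ X : Finset (Fin n), X ∉ K → q ≤ ∑ i ∈ X, w i := fun X hX =>
    le_of_not_gt fun h => hX ((hcl X).2 h)
  have hcompl : ∀ X : Finset (Fin n), ∑ i ∈ Xᶜ, w i = 1 - ∑ i ∈ X, w i := by
    intro X
    have := Finset.sum_add_sum_compl X w
    linarith
  refine ⟨?_, ?_, ?_⟩
  · intro X1 c1 c2 hne h1 h2 hX1 hins
    have h1' : c1 ∉ insert c2 X1 := by simp [hne, h1]
    have hins_sum : ∑ i ∈ insert c1 (insert c2 X1), w i = w c1 + w c2 + ∑ i ∈ X1, w i := by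
      rw [Finset.sum_insert h1', Finset.sum_insert h2]; ring
    have hbig := key2 _ hins
    rw [hins_sum] at hbig
    have hsmall := key1 _ hX1
    have hc := hcompl (insert c1 (insert c2 X1))
    rw [hins_sum] at hc
    refine ⟨fun _ _ => ?_, fun _ _ => ?_, fun _ _ => ⟨?_, ?_⟩⟩
    · beta_reduce
      simp only [← Finset.mul_sum, hc]
      nlinarith
    · beta_reduce
      simp only [← Finset.mul_sum, hc]
      nlinarith
    · show 0 < (1 - q) * w c2
      have := hw c2; nlinarith
    · show 0 < q * w c2
      have := hw c2; nlinarith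
  · intro Y hY
    have := key2 Y hY
    rw [hcompl]
    nlinarith
  · intro X hX
    have := key1 X hX
    rw [hcompl]
    nlinarith
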